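/- Define c(m,n,k,i,j) = Σ_{l=0}^{k} (-1)^l · C(i+j-k, i-l) · C(m-l, k-l) · C(n-k+l, l). Then the C13 symmetry holds: for all parameters in the domain, with i' = i+j-k and m' = m+n-2k, one has c(m', n, n-k, m'-i', j) = (-1)^{n-j} · c(m,n,k,i,j). -/

import Mathlib

open Finset

/-- Integer binomial coefficient: `C(a,b) = 0` when `b < 0` or `b > a`. -/
def ch (a b : ℤ) : ℤ := if 0 ≤ b ∧ b ≤ a then ((a.toNat).choose b.toNat : ℤ) else 0

/-- Clebsch-Gordan sum `c_{m,n,k}(i,j)`. -/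
def cg (m n k i j : ℕ) : ℤ :=
  ∑ l ∈ Finset.range (k+1),
    (-1:ℤ)^l * ch ((i:ℤ)+(j:ℤ)-(k:ℤ)) ((i:ℤ)-(l:ℤ))
      * ch ((m:ℤ)-(l:ℤ)) ((k:ℤ)-(l:ℤ)) * ch ((n:ℤ)-(k:ℤ)+(l:ℤ)) (l:ℤ)

/-- Trinomial coefficient `(a+b+c)! / (a! b! c!)`. -/
def mult (a b c : ℕ) : ℕ := (a+b+c).factorial / (a.factorial * b.factorial * c.factorial)

lemma ch_of_neg {a b : ℤ} (h : b < 0) : ch a b = 0 := by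
  rw [ch, if_neg]; rintro ⟨h1, _⟩; omega

lemma ch_of_gt {a b : ℤ} (h : a < b) : ch a b = 0 := by
  rw [ch, if_neg]; rintro ⟨_, h2⟩; omega

lemma ch_cast (a b : ℕ) : ch (a:ℤ) (b:ℤ) = (a.choose b : ℤ) := by
  by_cases h : b ≤ a
  · rw [ch, if_pos ⟨by positivity, by exact_mod_cast h⟩]; simp
  · rw [ch, if_neg, Nat.choose_eq_zero_of_lt (by omega)]
    · simp
    · rintro ⟨_, h2⟩; exact h (by exact_mod_cast h2)

lemma ch_zero {a : ℤ} (h : 0 ≤ a) : ch a 0 = 1 := by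
  rw [ch, if_pos ⟨le_refl 0, h⟩]; simp

lemma ch_self {a : ℤ} (h : 0 ≤ a) : ch a a = 1 := by
  rw [ch, if_pos ⟨h, le_refl a⟩]; simp

lemma ch_pascal {a b : ℤ} (h : 1 ≤ a) : ch a b = ch (a-1) b + ch (a-1) (b-1) := by
  obtain ⟨A, rfl⟩ : ∃ A : ℕ, a = (A:ℤ) + 1 := ⟨(a-1).toNat, by omega⟩
  by_cases hb0 : b < 0
  · rw [ch_of_neg hb0, ch_of_neg hb0, ch_of_neg (by omega)]; ring
  push_neg at hb0
  obtain ⟨B, rfl⟩ : ∃ B : ℕ, b = (B:ℤ) := ⟨b.toNat, by omega⟩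
  cases B with
  | zero =>
    have h1 : ((A:ℤ)+1) - 1 = (A:ℤ) := by ring
    rw [h1, Nat.cast_zero, ch_zero (by positivity), ch_zero (by positivity),
      ch_of_neg (by norm_num)]; ring
  | succ C =>
    have h1 : ((A:ℤ)+1) - 1 = (A:ℤ) := by ring
    have h2 : ((A:ℤ)+1) = ((A+1:ℕ):ℤ) := by push_cast; ring
    have h3 : ((C+1:ℕ):ℤ) - 1 = ((C:ℕ):ℤ) := by push_cast; ring
    rw [h1, h2, h3, ch_cast, ch_cast, ch_cast, Nat.choose_succ_succ]
    push_cast; ring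

lemma ch_symm {a b : ℤ} (h : 0 ≤ a) : ch a b = ch a (a - b) := by
  by_cases hb : b < 0
  · rw [ch_of_neg hb, ch_of_gt (by omega)]
  by_cases hba : a < b
  · rw [ch_of_gt hba, ch_of_neg (by omega)]
  push_neg at hb hba
  obtain ⟨A, rfl⟩ : ∃ A : ℕ, a = (A:ℤ) := ⟨a.toNat, by omega⟩
  obtain ⟨B, rfl⟩ : ∃ B : ℕ, b = (B:ℤ) := ⟨b.toNat, by omega⟩
  have hBA : B ≤ A := by exact_mod_cast hba
  have h1 : (A:ℤ) - B = ((A - B : ℕ):ℤ) := by omega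
  rw [h1, ch_cast, ch_cast, Nat.choose_symm hBA]

lemma ch_tri {N s t : ℤ} (hN : 0 ≤ N) (ht : 0 ≤ t) (hts : t ≤ s) :
    ch N s * ch s t = ch N t * ch (N-t) (s-t) := by
  by_cases hsN : N < s
  · rw [ch_of_gt hsN, ch_of_gt (show N - t < s - t by omega)]; ring
  push_neg at hsN
  obtain ⟨A, rfl⟩ : ∃ A : ℕ, N = (A:ℤ) := ⟨N.toNat, by omega⟩
  obtain ⟨S, rfl⟩ : ∃ S : ℕ, s = (S:ℤ) := ⟨s.toNat, by omega⟩
  obtain ⟨T, rfl⟩ : ∃ T : ℕ, t = (T:ℤ) := ⟨t.toNat, by omega⟩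
  have h1 : S ≤ A := by exact_mod_cast hsN
  have h2 : T ≤ S := by exact_mod_cast hts
  have e1 : (A:ℤ) - T = ((A - T : ℕ):ℤ) := by omega
  have e2 : (S:ℤ) - T = ((S - T : ℕ):ℤ) := by omega
  rw [e1, e2, ch_cast, ch_cast, ch_cast, ch_cast]
  exact_mod_cast Nat.choose_mul (n := A) h2

lemma npow_congr {a b : ℕ} (h : a % 2 = b % 2) : (-1:ℤ)^a = (-1:ℤ)^b := by
  rcases Nat.even_or_odd a with he | ho
  · have ha := Nat.even_iff.mp he
    rw [he.neg_one_pow, (Nat.even_iff.mpr (by omega)).neg_one_pow]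
  · have ha := Nat.odd_iff.mp ho
    rw [ho.neg_one_pow, (Nat.odd_iff.mpr (by omega)).neg_one_pow]

lemma lemW : ∀ (i m k : ℕ), i ≤ m →
    ∑ l ∈ Finset.range (k+1), (-1:ℤ)^l * ch (i:ℤ) (l:ℤ) * ch ((m:ℤ)-(l:ℤ)) ((k:ℤ)-(l:ℤ))
      = ch ((m:ℤ)-(i:ℤ)) (k:ℤ) := by
  intro i
  induction i with
  | zero =>
    intro m k _
    rw [Finset.sum_eq_single 0]
    · simp [ch_zero]
    · intro l _ hl
      rw [Nat.cast_zero, ch_of_gt (show (0:ℤ) < (l:ℤ) by exact_mod_cast Nat.pos_of_ne_zero hl)]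
      ring
    · intro h; exact absurd (Finset.mem_range.mpr (by omega)) h
  | succ i ih =>
    intro m k him
    obtain ⟨m', rfl⟩ : ∃ m', m = m' + 1 := ⟨m - 1, by omega⟩
    have him' : i ≤ m' := by omega
    have split : ∑ l ∈ Finset.range (k+1),
        (-1:ℤ)^l * ch ((i+1:ℕ):ℤ) (l:ℤ) * ch (((m'+1:ℕ):ℤ)-(l:ℤ)) ((k:ℤ)-(l:ℤ))
        = (∑ l ∈ Finset.range (k+1), (-1:ℤ)^l * ch (i:ℤ) (l:ℤ) * ch (((m'+1:ℕ):ℤ)-(l:ℤ)) ((k:ℤ)-(l:ℤ)))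
        + ∑ l ∈ Finset.range (k+1), (-1:ℤ)^l * ch (i:ℤ) ((l:ℤ)-1) * ch (((m'+1:ℕ):ℤ)-(l:ℤ)) ((k:ℤ)-(l:ℤ)) := by
      rw [← Finset.sum_add_distrib]
      apply Finset.sum_congr rfl
      intro l _
      have : ch ((i+1:ℕ):ℤ) (l:ℤ) = ch (i:ℤ) (l:ℤ) + ch (i:ℤ) ((l:ℤ)-1) := by
        have h1 : ((i+1:ℕ):ℤ) - 1 = (i:ℤ) := by push_cast; ring
        rw [ch_pascal (by push_cast; omega), h1]
      rw [this]; ring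
    rw [split, ih (m'+1) k (by omega)]
    have second : ∑ l ∈ Finset.range (k+1),
        (-1:ℤ)^l * ch (i:ℤ) ((l:ℤ)-1) * ch (((m'+1:ℕ):ℤ)-(l:ℤ)) ((k:ℤ)-(l:ℤ))
        = ∑ l ∈ Finset.range k,
          (-1:ℤ)^(l+1) * ch (i:ℤ) (l:ℤ) * ch ((m':ℤ)-(l:ℤ)) (((k:ℤ)-1)-(l:ℤ)) := by
      rw [Finset.sum_range_succ']
      have h0 : ch (i:ℤ) (((0:ℕ):ℤ)-1) = 0 := ch_of_neg (by norm_num)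
      rw [h0]
      simp only [mul_zero, zero_mul, add_zero]
      apply Finset.sum_congr rfl
      intro l _
      have e1 : ((l+1:ℕ):ℤ) - 1 = (l:ℤ) := by push_cast; ring
      have e2 : ((m'+1:ℕ):ℤ) - ((l+1:ℕ):ℤ) = (m':ℤ) - (l:ℤ) := by push_cast; ring
      have e3 : (k:ℤ) - ((l+1:ℕ):ℤ) = ((k:ℤ)-1) - (l:ℤ) := by push_cast; ring
      rw [e1, e2, e3]
    rw [second]
    cases k with
    | zero =>
      simp only [Finset.range_zero, Finset.sum_empty, add_zero, Nat.cast_zero]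
      rw [ch_zero (by push_cast; omega), ch_zero (by push_cast; omega)]
    | succ k' =>
      have e4 : ((k'+1:ℕ):ℤ) - 1 = (k':ℤ) := by push_cast; ring
      have trans : ∑ l ∈ Finset.range (k'+1),
          (-1:ℤ)^(l+1) * ch (i:ℤ) (l:ℤ) * ch ((m':ℤ)-(l:ℤ)) ((((k'+1:ℕ):ℤ))-1-(l:ℤ))
          = ∑ l ∈ Finset.range (k'+1),
            -((-1:ℤ)^l * ch (i:ℤ) (l:ℤ) * ch ((m':ℤ)-(l:ℤ)) ((k':ℤ)-(l:ℤ))) := by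
        apply Finset.sum_congr rfl
        intro l _
        rw [e4, pow_succ]; ring
      rw [trans, Finset.sum_neg_distrib, ih m' k' him']
      have h5 : (1:ℤ) ≤ ((m'+1:ℕ):ℤ) - (i:ℤ) := by push_cast; omega
      have e8 : ((m'+1:ℕ):ℤ) - ((i+1:ℕ):ℤ) = (m':ℤ) - (i:ℤ) := by push_cast; ring
      rw [e8, ch_pascal h5]
      have e6 : ((m'+1:ℕ):ℤ) - (i:ℤ) - 1 = (m':ℤ) - (i:ℤ) := by push_cast; ring
      rw [e6, e4]
      ring

lemma lemLn (m n k i : ℕ) (him : i ≤ m) (hkn : k ≤ n) :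
    cg m n k i n = ch ((i:ℤ)+(n:ℤ)-(k:ℤ)) ((n:ℤ)-(k:ℤ)) * ch ((m:ℤ)-(i:ℤ)) (k:ℤ) := by
  rw [cg]
  have key : ∀ l ∈ Finset.range (k+1),
      (-1:ℤ)^l * ch ((i:ℤ)+(n:ℤ)-(k:ℤ)) ((i:ℤ)-(l:ℤ))
        * ch ((m:ℤ)-(l:ℤ)) ((k:ℤ)-(l:ℤ)) * ch ((n:ℤ)-(k:ℤ)+(l:ℤ)) (l:ℤ)
      = ch ((i:ℤ)+(n:ℤ)-(k:ℤ)) ((n:ℤ)-(k:ℤ))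
        * ((-1:ℤ)^l * ch (i:ℤ) (l:ℤ) * ch ((m:ℤ)-(l:ℤ)) ((k:ℤ)-(l:ℤ))) := by
    intro l hl
    have hA : (0:ℤ) ≤ (i:ℤ)+(n:ℤ)-(k:ℤ) := by push_cast; omega
    have e1 : (i:ℤ)+(n:ℤ)-(k:ℤ) - ((i:ℤ)-(l:ℤ)) = (n:ℤ)-(k:ℤ)+(l:ℤ) := by ring
    have h3 : (0:ℤ) ≤ (n:ℤ)-(k:ℤ)+(l:ℤ) := by push_cast; omega
    have e2 : (n:ℤ)-(k:ℤ)+(l:ℤ) - (l:ℤ) = (n:ℤ)-(k:ℤ) := by ring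
    rw [ch_symm hA (b := (i:ℤ)-(l:ℤ)), e1, ch_symm h3 (b := (l:ℤ)), e2]
    have htri := ch_tri (N := (i:ℤ)+(n:ℤ)-(k:ℤ)) (s := (n:ℤ)-(k:ℤ)+(l:ℤ)) (t := (n:ℤ)-(k:ℤ))
      hA (by push_cast; omega) (by push_cast; omega)
    have e3 : (i:ℤ)+(n:ℤ)-(k:ℤ) - ((n:ℤ)-(k:ℤ)) = (i:ℤ) := by ring
    have e4 : (n:ℤ)-(k:ℤ)+(l:ℤ) - ((n:ℤ)-(k:ℤ)) = (l:ℤ) := by ring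
    rw [e3, e4] at htri
    calc (-1:ℤ)^l * ch ((i:ℤ)+(n:ℤ)-(k:ℤ)) ((n:ℤ)-(k:ℤ)+(l:ℤ))
          * ch ((m:ℤ)-(l:ℤ)) ((k:ℤ)-(l:ℤ)) * ch ((n:ℤ)-(k:ℤ)+(l:ℤ)) ((n:ℤ)-(k:ℤ))
        = (ch ((i:ℤ)+(n:ℤ)-(k:ℤ)) ((n:ℤ)-(k:ℤ)+(l:ℤ)) * ch ((n:ℤ)-(k:ℤ)+(l:ℤ)) ((n:ℤ)-(k:ℤ)))
            * ((-1:ℤ)^l * ch ((m:ℤ)-(l:ℤ)) ((k:ℤ)-(l:ℤ))) := by ring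
      _ = (ch ((i:ℤ)+(n:ℤ)-(k:ℤ)) ((n:ℤ)-(k:ℤ)) * ch (i:ℤ) (l:ℤ))
            * ((-1:ℤ)^l * ch ((m:ℤ)-(l:ℤ)) ((k:ℤ)-(l:ℤ))) := by rw [htri]
      _ = _ := by ring
  rw [Finset.sum_congr rfl key, ← Finset.mul_sum, lemW i m k him]

lemma lemSwap (m n k i j : ℕ) (hk : k ≤ i + j) :
    cg m n k i j = (-1:ℤ)^k * cg n m k j i := by
  rw [cg, cg, Finset.mul_sum]
  rw [← Finset.sum_range_reflect]
  apply Finset.sum_congr rfl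
  intro l hl
  rw [Finset.mem_range] at hl
  have hlk : l ≤ k := by omega
  have ec : ((k + 1 - 1 - l : ℕ):ℤ) = (k:ℤ) - (l:ℤ) := by
    have : k + 1 - 1 - l = k - l := by omega
    rw [this]; omega
  rw [ec]
  have hA : (0:ℤ) ≤ (i:ℤ)+(j:ℤ)-(k:ℤ) := by push_cast; omega
  have e1 : (i:ℤ) - ((k:ℤ)-(l:ℤ)) = (i:ℤ)+(j:ℤ)-(k:ℤ) - ((j:ℤ)-(l:ℤ)) := by ring
  have e2 : (j:ℤ)+(i:ℤ)-(k:ℤ) = (i:ℤ)+(j:ℤ)-(k:ℤ) := by ring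
  have epow : (-1:ℤ)^(k-l) * (-1:ℤ)^l = (-1:ℤ)^k := by
    rw [← pow_add]; congr 1; omega
  have epow2 : (-1:ℤ)^(k+1-1-l) = (-1:ℤ)^k * (-1:ℤ)^l := by
    have h2 : k+1-1-l = k-l := by omega
    rw [h2]
    have h3 := epow
    have h4 : ((-1:ℤ)^l) * ((-1:ℤ)^l) = 1 := by
      rw [← mul_pow]; norm_num
    calc (-1:ℤ)^(k-l) = (-1:ℤ)^(k-l) * (((-1:ℤ)^l) * ((-1:ℤ)^l)) := by rw [h4]; ring
      _ = ((-1:ℤ)^(k-l) * (-1:ℤ)^l) * (-1:ℤ)^l := by ring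
      _ = (-1:ℤ)^k * (-1:ℤ)^l := by rw [epow]
  rw [epow2, e1, ← ch_symm hA (b := (j:ℤ)-(l:ℤ)), e2]
  have e3 : (m:ℤ) - ((k:ℤ)-(l:ℤ)) = (m:ℤ)-(k:ℤ)+(l:ℤ) := by ring
  have e4 : (k:ℤ) - ((k:ℤ)-(l:ℤ)) = (l:ℤ) := by ring
  have e5 : (n:ℤ) - (k:ℤ) + ((k:ℤ)-(l:ℤ)) = (n:ℤ)-(l:ℤ) := by ring
  rw [e3, e4, e5]
  ring

lemma lemLm (m n k j : ℕ) (hkm : k ≤ m) (hjn : j ≤ n) :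
    cg m n k m j = (-1:ℤ)^k * (ch ((j:ℤ)+(m:ℤ)-(k:ℤ)) ((m:ℤ)-(k:ℤ)) * ch ((n:ℤ)-(j:ℤ)) (k:ℤ)) := by
  rw [lemSwap m n k m j (by omega), lemLn n m k j hjn hkm]

lemma lemP1 (m n k i j : ℕ) (hi : 1 ≤ i) (hj : 1 ≤ j) (hij : k + 1 ≤ i + j) :
    cg m n k i j = cg m n k i (j-1) + cg m n k (i-1) j := by
  rw [cg, cg, cg, ← Finset.sum_add_distrib]
  apply Finset.sum_congr rfl
  intro l _
  have hA : (1:ℤ) ≤ (i:ℤ)+(j:ℤ)-(k:ℤ) := by push_cast; omega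
  rw [ch_pascal hA (b := (i:ℤ)-(l:ℤ))]
  have e1 : (i:ℤ)+(j:ℤ)-(k:ℤ)-1 = (i:ℤ)+((j-1:ℕ):ℤ)-(k:ℤ) := by omega
  have e2 : (i:ℤ)+(j:ℤ)-(k:ℤ)-1 = ((i-1:ℕ):ℤ)+(j:ℤ)-(k:ℤ) := by omega
  have e3 : (i:ℤ)-(l:ℤ)-1 = ((i-1:ℕ):ℤ)-(l:ℤ) := by omega
  calc (-1:ℤ)^l * (ch ((i:ℤ)+(j:ℤ)-(k:ℤ)-1) ((i:ℤ)-(l:ℤ)) + ch ((i:ℤ)+(j:ℤ)-(k:ℤ)-1) ((i:ℤ)-(l:ℤ)-1))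
      * ch ((m:ℤ)-(l:ℤ)) ((k:ℤ)-(l:ℤ)) * ch ((n:ℤ)-(k:ℤ)+(l:ℤ)) (l:ℤ)
      = (-1:ℤ)^l * ch ((i:ℤ)+((j-1:ℕ):ℤ)-(k:ℤ)) ((i:ℤ)-(l:ℤ)) * ch ((m:ℤ)-(l:ℤ)) ((k:ℤ)-(l:ℤ)) * ch ((n:ℤ)-(k:ℤ)+(l:ℤ)) (l:ℤ)
      + (-1:ℤ)^l * ch (((i-1:ℕ):ℤ)+(j:ℤ)-(k:ℤ)) (((i-1:ℕ):ℤ)-(l:ℤ)) * ch ((m:ℤ)-(l:ℤ)) ((k:ℤ)-(l:ℤ)) * ch ((n:ℤ)-(k:ℤ)+(l:ℤ)) (l:ℤ) := by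
        rw [← e1, ← e2, ← e3]; ring
    _ = _ := by ring

-- single-term evaluations
lemma cg_bot (m n k i j : ℕ) (hij : i + j = k) (him : i ≤ m) (hkn : k ≤ n) :
    cg m n k i j = (-1:ℤ)^i * (ch ((m:ℤ)-(i:ℤ)) ((k:ℤ)-(i:ℤ)) * ch ((n:ℤ)-(k:ℤ)+(i:ℤ)) (i:ℤ)) := by
  rw [cg, Finset.sum_eq_single i]
  · have e0 : (i:ℤ)+(j:ℤ)-(k:ℤ) = 0 := by omega
    rw [e0, sub_self, ch_zero (le_refl 0)]; ring
  · intro l _ hl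
    have e0 : (i:ℤ)+(j:ℤ)-(k:ℤ) = 0 := by omega
    rcases lt_or_gt_of_ne hl with h | h
    · rw [e0, ch_of_gt (show (0:ℤ) < (i:ℤ)-(l:ℤ) by push_cast; omega)]; ring
    · rw [e0, ch_of_neg (show (i:ℤ)-(l:ℤ) < 0 by push_cast; omega)]; ring
  · intro h; exact absurd (Finset.mem_range.mpr (by omega)) h

lemma cg_j0 (m n k i : ℕ) (hik : k ≤ i) (hkm : k ≤ m) :
    cg m n k i 0 = (-1:ℤ)^k * ch (n:ℤ) (k:ℤ) := by
  rw [cg, Finset.sum_eq_single k]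
  · have e1 : (n:ℤ)-(k:ℤ)+(k:ℤ) = (n:ℤ) := by ring
    have e2 : (i:ℤ)+((0:ℕ):ℤ)-(k:ℤ) = (i:ℤ)-(k:ℤ) := by push_cast; ring
    rw [e1, e2, sub_self, ch_zero (by push_cast; omega), ch_self (by push_cast; omega)]
    ring
  · intro l hl' hl
    rw [Finset.mem_range] at hl'
    have hlk : l < k := by omega
    have e2 : (i:ℤ)+((0:ℕ):ℤ)-(k:ℤ) = (i:ℤ)-(k:ℤ) := by push_cast; ring
    rw [e2, ch_of_gt (show (i:ℤ)-(k:ℤ) < (i:ℤ)-(l:ℤ) by push_cast; omega)]; ring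
  · intro h; exact absurd (Finset.mem_range.mpr (by omega)) h

lemma cg_i0 (m n k j : ℕ) (hjk : k ≤ j) (hkn : k ≤ n) :
    cg m n k 0 j = ch (m:ℤ) (k:ℤ) := by
  rw [cg, Finset.sum_eq_single 0]
  · simp only [Nat.cast_zero, zero_add, sub_zero, add_zero, sub_self, pow_zero, one_mul]
    rw [ch_zero (show (0:ℤ) ≤ (j:ℤ)-(k:ℤ) by omega),
      ch_zero (show (0:ℤ) ≤ (n:ℤ)-(k:ℤ) by omega)]
    ring
  · intro l _ hl
    have hl' := Nat.pos_of_ne_zero hl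
    rw [ch_of_neg (show ((0:ℕ):ℤ)-(l:ℤ) < 0 by push_cast; omega)]
    ring
  · intro h; exact absurd (Finset.mem_range.mpr (by omega)) h

-- region lemma
lemma lemVS (m n k : ℕ) (hkm : k ≤ m) (hkn : k ≤ n) :
    ∀ d i j, i ≤ m → j ≤ n → m + n ≤ i + j + k → j + d = n →
    cg m n k i j = if i + j + k = m + n then (-1:ℤ)^d * ch ((m:ℤ)+(n:ℤ)-2*(k:ℤ)) ((n:ℤ)-(k:ℤ)) else 0 := by
  intro d
  induction d with
  | zero =>
    intro i j him hjn hreg hjd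
    have hj : j = n := by omega
    rw [hj, lemLn m n k i him hkn]
    by_cases hc : i + n + k = m + n
    · rw [if_pos hc]
      have e1 : (m:ℤ)-(i:ℤ) = (k:ℤ) := by omega
      have e2 : (i:ℤ)+(n:ℤ)-(k:ℤ) = (m:ℤ)+(n:ℤ)-2*(k:ℤ) := by omega
      rw [e1, e2, ch_self (by positivity)]
      ring
    · rw [if_neg hc, ch_of_gt (show (m:ℤ)-(i:ℤ) < (k:ℤ) by omega)]
      ring
  | succ d ih =>
    intro i j him hjn hreg hjd
    have hi : 1 ≤ i := by omega
    have hj1 : j + 1 ≤ n := by omega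
    have hp := lemP1 m n k i (j+1) hi (by omega) (by omega)
    have e : j + 1 - 1 = j := by omega
    rw [e] at hp
    have v1 := ih i (j+1) him hj1 (by omega) (by omega)
    have v2 := ih (i-1) (j+1) (by omega) hj1 (by omega) (by omega)
    have hcg : cg m n k i j = cg m n k i (j+1) - cg m n k (i-1) (j+1) := by linarith
    rw [hcg, v1, v2]
    by_cases hc : i + j + k = m + n
    · rw [if_pos hc, if_neg (by omega), if_pos (by omega), pow_succ]
      ring
    · rw [if_neg hc, if_neg (by omega), if_neg (by omega)]
      ring

lemma caseA (m n k i j M I : ℕ) (hA : i + j = k) (hkm : k ≤ m) (hkn : k ≤ n)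
    (him : i ≤ m) (hjn : j ≤ n) (hM : M + 2*k = m+n) (hI : I + (i+j) = M + k) :
    cg M n (n-k) I j = (-1:ℤ)^(n-j) * cg m n k i j := by
  have hIM : I = M := by omega
  rw [hIM, lemLm M n (n-k) j (by omega) hjn, cg_bot m n k i j hA him hkn]
  have c1 : ((n-k:ℕ):ℤ) = (n:ℤ)-(k:ℤ) := by omega
  rw [c1]
  have e1 : (j:ℤ)+(M:ℤ)-((n:ℤ)-(k:ℤ)) = (m:ℤ)-(i:ℤ) := by omega
  have e2 : (M:ℤ)-((n:ℤ)-(k:ℤ)) = (m:ℤ)-(k:ℤ) := by omega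
  rw [e1, e2]
  have s1 : ch ((m:ℤ)-(i:ℤ)) ((m:ℤ)-(k:ℤ)) = ch ((m:ℤ)-(i:ℤ)) ((k:ℤ)-(i:ℤ)) := by
    rw [ch_symm (show (0:ℤ) ≤ (m:ℤ)-(i:ℤ) by omega)]; congr 1; ring
  have s2 : ch ((n:ℤ)-(j:ℤ)) ((n:ℤ)-(k:ℤ)) = ch ((n:ℤ)-(k:ℤ)+(i:ℤ)) ((i:ℤ)) := by
    have e3 : (n:ℤ)-(j:ℤ) = (n:ℤ)-(k:ℤ)+(i:ℤ) := by omega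
    rw [e3, ch_symm (show (0:ℤ) ≤ (n:ℤ)-(k:ℤ)+(i:ℤ) by omega)]; congr 1; ring
  rw [s1, s2]
  have sgn : (-1:ℤ)^(n-k) = (-1:ℤ)^(n-j) * (-1:ℤ)^i := by
    rw [← pow_add]; exact npow_congr (by omega)
  rw [sgn]; ring

lemma caseB (m n k i M I : ℕ) (hik : k ≤ i) (hkm : k ≤ m) (hkn : k ≤ n)
    (him : i ≤ m) (hM : M + 2*k = m+n) (hI : I + (i+0) = M + k) :
    cg M n (n-k) I 0 = (-1:ℤ)^(n-0) * cg m n k i 0 := by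
  rw [cg_j0 M n (n-k) I (by omega) (by omega), cg_j0 m n k i hik hkm]
  have c1 : ((n-k:ℕ):ℤ) = (n:ℤ)-(k:ℤ) := by omega
  rw [c1, ← ch_symm (show (0:ℤ) ≤ (n:ℤ) by positivity)]
  have sgn : (-1:ℤ)^(n-k) = (-1:ℤ)^(n-0) * (-1:ℤ)^k := by
    rw [← pow_add]; exact npow_congr (by omega)
  rw [sgn]; ring

lemma caseC (m n k j M I : ℕ) (hjk : k ≤ j) (hkm : k ≤ m) (hkn : k ≤ n)
    (hjn : j ≤ n) (hM : M + 2*k = m+n) (hI : I + (0+j) = M + k) :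
    cg M n (n-k) I j = (-1:ℤ)^(n-j) * cg m n k 0 j := by
  rw [cg_i0 m n k j hjk hkn]
  have hv := lemVS M n (n-k) (by omega) (by omega) (n-j) I j (by omega) hjn (by omega) (by omega)
  rw [hv, if_pos (by omega)]
  have e1 : (M:ℤ)+(n:ℤ)-2*((n-k:ℕ):ℤ) = (m:ℤ) := by omega
  have e2 : (n:ℤ)-((n-k:ℕ):ℤ) = (k:ℤ) := by omega
  rw [e1, e2]

lemma main_aux : ∀ (s m n k i j M I : ℕ), i + j ≤ s → k ≤ m → k ≤ n → i ≤ m → j ≤ n →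
    k ≤ i + j → M + 2*k = m + n → I + (i + j) = M + k →
    cg M n (n-k) I j = (-1:ℤ)^(n-j) * cg m n k i j := by
  intro s
  induction s with
  | zero =>
    intro m n k i j M I hs hkm hkn him hjn hk hM hI
    exact caseA m n k i j M I (by omega) hkm hkn him hjn hM hI
  | succ s ih =>
    intro m n k i j M I hs hkm hkn him hjn hk hM hI
    by_cases hA : i + j = k
    · exact caseA m n k i j M I hA hkm hkn him hjn hM hI
    by_cases hj0 : j = 0
    · subst hj0
      exact caseB m n k i M I (by omega) hkm hkn him hM hI
    by_cases hi0 : i = 0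
    · subst hi0
      exact caseC m n k j M I (by omega) hkm hkn hjn hM hI
    -- inductive step
    have hi : 1 ≤ i := by omega
    have hj : 1 ≤ j := by omega
    have hp := lemP1 m n k i j hi hj (by omega)
    have hq := lemP1 M n (n-k) (I+1) j (by omega) hj (by omega)
    have eI : I + 1 - 1 = I := by omega
    rw [eI] at hq
    have ih1 := ih m n k i (j-1) M (I+1) (by omega) hkm hkn him (by omega) (by omega) hM (by omega)
    have ih2 := ih m n k (i-1) j M (I+1) (by omega) hkm hkn (by omega) hjn (by omega) hM (by omega)
    have key : cg M n (n-k) I j = cg M n (n-k) (I+1) j - cg M n (n-k) (I+1) (j-1) := by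
      linarith
    have sgn : (-1:ℤ)^(n-(j-1)) = (-1:ℤ)^(n-j) * (-1:ℤ) := by
      have e : n-(j-1) = (n-j)+1 := by omega
      rw [e, pow_succ]
    rw [hp, key, ih2, ih1, sgn]
    ring

theorem stmt_6 (m n k i j : ℕ) (hkm : k ≤ m) (hkn : k ≤ n) (him : i ≤ m) (hjn : j ≤ n)
    (hk : k ≤ i + j) (hub : i + j ≤ m + n - k) :
    cg (m + n - 2*k) n (n - k) ((m + n - 2*k) - (i + j - k)) j
      = (-1:ℤ)^(n - j) * cg m n k i j :=
  main_aux (i+j) m n k i j (m + n - 2*k) ((m + n - 2*k) - (i + j - k)) le_rfl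
    hkm hkn him hjn hk (by omega) (by omega)
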